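/- Assume that for some γ > 0 the weighted system x_{k+1} = (1/γ)A_k x_k admits a strong nonuniform exponential dichotomy with invariant projector P and constants K ≥ 1, 0 < α < 1, ε ≥ 1 (α ε² < 1). Then for every l ∈ ℤ the stable fiber equals the image of the projector and the unstable fiber equals its kernel: S_γ(l) = im P_l, U_γ(l) = ker P_l, and consequently S_γ(l) ⊕ U_γ(l) = ℝ^N. -/

import Mathlib

open Matrix

attribute [local instance] Matrix.linftyOpNormedAddCommGroup

attribute [local instance] Matrix.linftyOpNormSMulClass

abbrev Mat (N : ℕ) := Matrix (Fin N) (Fin N) ℝ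

noncomputable def fundSolNat {N : ℕ} (A : ℤ → GL (Fin N) ℝ) : ℕ → GL (Fin N) ℝ
  | 0 => 1
  | n + 1 => A (n : ℤ) * fundSolNat A n

noncomputable def fundSolNeg {N : ℕ} (A : ℤ → GL (Fin N) ℝ) : ℕ → GL (Fin N) ℝ
  | 0 => (A (-1))⁻¹
  | n + 1 => (A (Int.negSucc (n + 1)))⁻¹ * fundSolNeg A n

noncomputable def fundSol {N : ℕ} (A : ℤ → GL (Fin N) ℝ) : ℤ → GL (Fin N) ℝ
  | Int.ofNat n => fundSolNat A n
  | Int.negSucc n => fundSolNeg A n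

/-- The evolution operator `Φ(k,l)` of `x_{k+1} = A_k x_k`. -/
noncomputable def evol {N : ℕ} (A : ℤ → GL (Fin N) ℝ) (k l : ℤ) : Mat N :=
  ↑(fundSol A k * (fundSol A l)⁻¹)

def IsInvariantProjector {N : ℕ} (A : ℤ → GL (Fin N) ℝ) (P : ℤ → Mat N) : Prop :=
  (∀ k, P k * P k = P k) ∧ ∀ k, P (k + 1) * (A k : Mat N) = (A k : Mat N) * P k

/-- Evolution operator `Φ_γ(k,l) = γ^{-(k-l)} Φ(k,l)` of `x_{k+1} = (1/γ) A_k x_k`. -/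
noncomputable def evolW {N : ℕ} (A : ℤ → GL (Fin N) ℝ) (γ : ℝ) (k l : ℤ) : Mat N :=
  γ ^ (l - k) • evol A k l

def NEDWith {N : ℕ} (A : ℤ → GL (Fin N) ℝ) (γ : ℝ) (P : ℤ → Mat N) (K α ε : ℝ) : Prop :=
  IsInvariantProjector A P ∧ 1 ≤ K ∧ 0 < α ∧ α < 1 ∧ 1 ≤ ε ∧
    (∀ k l : ℤ, l ≤ k → ‖evolW A γ k l * P l‖ ≤ K * α ^ (k - l) * ε ^ l) ∧
    (∀ k l : ℤ, k ≤ l → ‖evolW A γ k l * (1 - P l)‖ ≤ K * (1 / α) ^ (k - l) * ε ^ l)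

def HasNED {N : ℕ} (A : ℤ → GL (Fin N) ℝ) (γ : ℝ) : Prop :=
  ∃ P K α ε, NEDWith A γ P K α ε

def HasStrongNED {N : ℕ} (A : ℤ → GL (Fin N) ℝ) (γ : ℝ) : Prop :=
  ∃ P K α ε, NEDWith A γ P K α ε ∧ α * ε ^ 2 < 1

def HasED {N : ℕ} (A : ℤ → GL (Fin N) ℝ) (γ : ℝ) : Prop :=
  ∃ P K α, NEDWith A γ P K α 1

def SigmaNED {N : ℕ} (A : ℤ → GL (Fin N) ℝ) : Set ℝ := {γ | 0 < γ ∧ ¬ HasStrongNED A γ}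

def rhoNED {N : ℕ} (A : ℤ → GL (Fin N) ℝ) : Set ℝ := {γ | 0 < γ ∧ HasStrongNED A γ}

def SigmaED {N : ℕ} (A : ℤ → GL (Fin N) ℝ) : Set ℝ := {γ | 0 < γ ∧ ¬ HasED A γ}

def stableSet {N : ℕ} (A : ℤ → GL (Fin N) ℝ) (γ ε : ℝ) (l : ℤ) : Set (Fin N → ℝ) :=
  {ξ | ∃ C : ℝ, ∀ k : ℤ, l ≤ k → ‖(evol A k l).mulVec ξ‖ * γ ^ (-k) * ε ^ (-l) ≤ C}

def unstableSet {N : ℕ} (A : ℤ → GL (Fin N) ℝ) (γ ε : ℝ) (l : ℤ) : Set (Fin N → ℝ) :=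
  {ξ | ∃ C : ℝ, ∀ k : ℤ, k ≤ l → ‖(evol A k l).mulVec ξ‖ * γ ^ (-k) * ε ^ (-l) ≤ C}


section Aux

variable {N : ℕ}

lemma fundSol_succ (A : ℤ → GL (Fin N) ℝ) (k : ℤ) :
    fundSol A (k + 1) = A k * fundSol A k := by
  cases k with
  | ofNat n =>
    show fundSol A (Int.ofNat (n+1)) = _
    simp only [fundSol, fundSolNat]
    rfl
  | negSucc n =>
    cases n with
    | zero =>
      have h : Int.negSucc 0 + 1 = Int.ofNat 0 := by decide
      rw [h]
      show (1 : GL (Fin N) ℝ) = A (Int.negSucc 0) * (A (-1))⁻¹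
      have : ((-1 : ℤ)) = Int.negSucc 0 := rfl
      rw [← this, mul_inv_cancel]
    | succ n =>
      have h : Int.negSucc (n+1) + 1 = Int.negSucc n := by
        rw [Int.negSucc_eq, Int.negSucc_eq]; push_cast; ring
      rw [h]
      show fundSolNeg A n = A (Int.negSucc (n+1)) * fundSolNeg A (n+1)
      rw [fundSolNeg, ← mul_assoc, mul_inv_cancel, one_mul]

lemma evol_mul' (A : ℤ → GL (Fin N) ℝ) (k m l : ℤ) :
    evol A k m * evol A m l = evol A k l := by
  rw [evol, evol, evol, ← Units.val_mul]
  congr 1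
  group

lemma evol_self (A : ℤ → GL (Fin N) ℝ) (l : ℤ) : evol A l l = 1 := by
  rw [evol, mul_inv_cancel, Units.val_one]

lemma proj_fundSol {A : ℤ → GL (Fin N) ℝ} {P : ℤ → Mat N}
    (hP : IsInvariantProjector A P) (k : ℤ) :
    P k * (fundSol A k : Mat N) = (fundSol A k : Mat N) * P 0 := by
  induction k using Int.induction_on with
  | zero =>
    have h0 : (fundSol A 0 : Mat N) = 1 := rfl
    rw [h0, mul_one, one_mul]
  | succ k ih =>
    rw [fundSol_succ, Units.val_mul, ← mul_assoc, hP.2 k, mul_assoc, ih, mul_assoc]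
  | pred k ih =>
    have hrec : (fundSol A (-k) : Mat N) = (A (-k-1) : Mat N) * (fundSol A (-k-1) : Mat N) := by
      have h := fundSol_succ A (-k-1)
      rw [show (-k-1+1 : ℤ) = -(k:ℤ) by ring] at h
      rw [h, Units.val_mul]
    have hinv : P (-k) * (A (-k-1) : Mat N) = (A (-k-1) : Mat N) * P (-k-1) := by
      have := hP.2 (-k-1)
      rwa [show (-k-1+1 : ℤ) = -(k:ℤ) by ring] at this
    have key : (A (-k-1) : Mat N) * (P (-k-1) * (fundSol A (-k-1) : Mat N)) =
        (A (-k-1) : Mat N) * ((fundSol A (-k-1) : Mat N) * P 0) := by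
      rw [← mul_assoc, ← hinv, mul_assoc, ← hrec, ih, hrec, mul_assoc]
    have h2 := congrArg (fun M => (((A (-k-1))⁻¹ : GL (Fin N) ℝ) : Mat N) * M) key
    simp only [← mul_assoc] at h2
    rw [show (((A (-k-1))⁻¹ : GL (Fin N) ℝ) : Mat N) * (A (-k-1) : Mat N) = 1 from Units.inv_mul _,
      one_mul, one_mul] at h2
    exact h2

lemma proj_evol {A : ℤ → GL (Fin N) ℝ} {P : ℤ → Mat N}
    (hP : IsInvariantProjector A P) (k l : ℤ) :
    P k * evol A k l = evol A k l * P l := by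
  have hk := proj_fundSol hP k
  have hl := proj_fundSol hP l
  have hl' : P 0 * (((fundSol A l)⁻¹ : GL (Fin N) ℝ) : Mat N) =
      (((fundSol A l)⁻¹ : GL (Fin N) ℝ) : Mat N) * P l := by
    have h2 := congrArg (fun M => (((fundSol A l)⁻¹ : GL (Fin N) ℝ) : Mat N) * M *
      (((fundSol A l)⁻¹ : GL (Fin N) ℝ) : Mat N)) hl
    simp only [← mul_assoc] at h2
    rw [show (((fundSol A l)⁻¹ : GL (Fin N) ℝ) : Mat N) * (fundSol A l : Mat N) = 1 from
      Units.inv_mul _, one_mul] at h2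
    rw [mul_assoc (_ * _), show ((fundSol A l : Mat N)) * (((fundSol A l)⁻¹ : GL (Fin N) ℝ) : Mat N) = 1 from Units.mul_inv _, mul_one] at h2
    exact h2.symm
  rw [evol, Units.val_mul, ← mul_assoc, hk, mul_assoc, hl', ← mul_assoc]

lemma norm_evol_eq (A : ℤ → GL (Fin N) ℝ) {γ : ℝ} (hγ : 0 < γ) (k l : ℤ) (M : Mat N) :
    ‖evol A k l * M‖ = γ ^ (k - l) * ‖evolW A γ k l * M‖ := by
  rw [evolW, smul_mul_assoc, norm_smul, Real.norm_eq_abs,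
    abs_of_pos (zpow_pos hγ _), ← mul_assoc, ← zpow_add₀ (ne_of_gt hγ),
    show k - l + (l - k) = 0 by ring, zpow_zero, one_mul]

lemma vanish_of_le_geom {v c r : ℝ} (hv : 0 ≤ v) (hr0 : 0 ≤ r) (hr1 : r < 1)
    (h : ∀ n : ℕ, v ≤ c * r ^ n) : v = 0 := by
  have ht : Filter.Tendsto (fun n : ℕ => c * r ^ n) Filter.atTop (nhds 0) := by
    simpa using (tendsto_pow_atTop_nhds_zero_of_lt_one hr0 hr1).const_mul c
  exact le_antisymm (ge_of_tendsto' ht h) hv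

lemma le_of_weighted_le {a C g e : ℝ} (hg : 0 < g) (he : 0 < e)
    (h : a * g⁻¹ * e⁻¹ ≤ C) : a ≤ C * (g * e) := by
  have h2 := mul_le_mul_of_nonneg_right h (le_of_lt (mul_pos hg he))
  calc a = a * g⁻¹ * e⁻¹ * (g * e) := by field_simp
    _ ≤ C * (g * e) := h2

end Aux

/-- If the weighted system `x_{k+1} = (1/γ) A_k x_k` admits a strong
nonuniform exponential dichotomy with invariant projector `P` and constants
`K ≥ 1`, `0 < α < 1`, `ε ≥ 1`, `α ε² < 1`, then for every `l` the stable fiber is the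
image of `P_l`, the unstable fiber is the kernel of `P_l`, and together they
decompose `ℝ^N` as a direct sum. -/
theorem stable_unstable_fibers_of_strongNED {N : ℕ} (A : ℤ → GL (Fin N) ℝ)
    (γ : ℝ) (hγ : 0 < γ) (P : ℤ → Mat N) (K α ε : ℝ)
    (hNED : NEDWith A γ P K α ε) (hstrong : α * ε ^ 2 < 1) :
    (∀ l : ℤ, stableSet A γ ε l = Set.range (P l).mulVec) ∧
    (∀ l : ℤ, unstableSet A γ ε l = {ξ : Fin N → ℝ | (P l).mulVec ξ = 0}) ∧
    (∀ l : ℤ, stableSet A γ ε l ∩ unstableSet A γ ε l = {0}) ∧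
    (∀ l : ℤ, ∀ ξ : Fin N → ℝ, ∃ x ∈ stableSet A γ ε l, ∃ y ∈ unstableSet A γ ε l,
      ξ = x + y) := by
  obtain ⟨hP, hK, hα0, hα1, hε, hS, hU⟩ := hNED
  have hγ' : γ ≠ 0 := ne_of_gt hγ
  have hε0 : (0:ℝ) < ε := lt_of_lt_of_le one_pos hε
  have hε' : ε ≠ 0 := ne_of_gt hε0
  have hαε : α * ε < 1 := by nlinarith
  have hαε0 : (0:ℝ) ≤ α * ε := by positivity
  have hαdε : α / ε < 1 := by
    rw [div_lt_one hε0]; exact lt_of_lt_of_le hα1 hε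
  have hαdε0 : (0:ℝ) ≤ α / ε := by positivity
  -- forward: image of P l is stable
  have mem_stable : ∀ (l : ℤ) (ξ : Fin N → ℝ), (P l).mulVec ξ = ξ → ξ ∈ stableSet A γ ε l := by
    intro l ξ hξ
    refine ⟨K * γ ^ (-l) * ‖ξ‖, fun k hlk => ?_⟩
    have h1 : ‖(evol A k l).mulVec ξ‖ ≤ γ ^ (k - l) * (K * α ^ (k - l) * ε ^ l) * ‖ξ‖ := by
      conv_lhs => rw [← hξ]
      rw [Matrix.mulVec_mulVec]
      calc ‖(evol A k l * P l).mulVec ξ‖ ≤ ‖evol A k l * P l‖ * ‖ξ‖ :=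
            Matrix.linfty_opNorm_mulVec _ _
        _ ≤ _ := by
            apply mul_le_mul_of_nonneg_right _ (norm_nonneg _)
            rw [norm_evol_eq A hγ k l]
            exact mul_le_mul_of_nonneg_left (hS k l hlk) (by positivity)
    have hα1' : α ^ (k - l) ≤ 1 := zpow_le_one₀ hα0 (le_of_lt hα1) (by omega)
    calc ‖(evol A k l).mulVec ξ‖ * γ ^ (-k) * ε ^ (-l)
        ≤ (γ ^ (k - l) * (K * α ^ (k - l) * ε ^ l) * ‖ξ‖) * γ ^ (-k) * ε ^ (-l) := by
          gcongr <;> positivity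
      _ = (K * γ ^ (-l) * ‖ξ‖) * α ^ (k - l) := by
          rw [zpow_sub₀ hγ', _root_.zpow_neg, _root_.zpow_neg, _root_.zpow_neg]
          field_simp
      _ ≤ (K * γ ^ (-l) * ‖ξ‖) * 1 := by
          apply mul_le_mul_of_nonneg_left hα1' (by positivity)
      _ = K * γ ^ (-l) * ‖ξ‖ := mul_one _
  -- forward: kernel of P l is unstable
  have mem_unstable : ∀ (l : ℤ) (ξ : Fin N → ℝ), (P l).mulVec ξ = 0 → ξ ∈ unstableSet A γ ε l := by
    intro l ξ hξ
    refine ⟨K * γ ^ (-l) * ‖ξ‖, fun k hkl => ?_⟩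
    have hξ' : ((1 : Mat N) - P l).mulVec ξ = ξ := by
      rw [Matrix.sub_mulVec, Matrix.one_mulVec, hξ, sub_zero]
    have h1 : ‖(evol A k l).mulVec ξ‖ ≤ γ ^ (k - l) * (K * (1/α) ^ (k - l) * ε ^ l) * ‖ξ‖ := by
      conv_lhs => rw [← hξ']
      rw [Matrix.mulVec_mulVec]
      calc ‖(evol A k l * ((1 : Mat N) - P l)).mulVec ξ‖
          ≤ ‖evol A k l * ((1 : Mat N) - P l)‖ * ‖ξ‖ := Matrix.linfty_opNorm_mulVec _ _
        _ ≤ _ := by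
            apply mul_le_mul_of_nonneg_right _ (norm_nonneg _)
            rw [norm_evol_eq A hγ k l]
            exact mul_le_mul_of_nonneg_left (hU k l hkl) (by positivity)
    have hpow : (1/α : ℝ) ^ (k - l) = α ^ (l - k) := by
      rw [one_div, _root_.inv_zpow, ← _root_.zpow_neg, neg_sub]
    have hα1' : α ^ (l - k) ≤ 1 := zpow_le_one₀ hα0 (le_of_lt hα1) (by omega)
    calc ‖(evol A k l).mulVec ξ‖ * γ ^ (-k) * ε ^ (-l)
        ≤ (γ ^ (k - l) * (K * (1/α) ^ (k - l) * ε ^ l) * ‖ξ‖) * γ ^ (-k) * ε ^ (-l) := by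
          gcongr <;> positivity
      _ = (K * γ ^ (-l) * ‖ξ‖) * α ^ (l - k) := by
          rw [hpow, zpow_sub₀ hγ', _root_.zpow_neg, _root_.zpow_neg, _root_.zpow_neg]
          field_simp
      _ ≤ (K * γ ^ (-l) * ‖ξ‖) * 1 := by
          apply mul_le_mul_of_nonneg_left hα1' (by positivity)
      _ = K * γ ^ (-l) * ‖ξ‖ := mul_one _
  -- converse: stable vectors satisfy P l ξ = ξ
  have stable_mem : ∀ (l : ℤ) (ξ : Fin N → ℝ), ξ ∈ stableSet A γ ε l → (P l).mulVec ξ = ξ := by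
    intro l ξ ⟨C, hC⟩
    have key : ∀ n : ℕ, ‖((1 : Mat N) - P l).mulVec ξ‖
        ≤ (K * C * γ ^ l * ε ^ l * ε ^ l) * (α * ε) ^ n := by
      intro n
      set k : ℤ := l + n with hk
      have hlk : l ≤ k := by simp [hk]
      have hcomm : ((1 : Mat N) - P k) * evol A k l = evol A k l * ((1 : Mat N) - P l) := by
        rw [sub_mul, mul_sub, one_mul, mul_one, proj_evol hP]
      have hid : (evol A l k * ((1 : Mat N) - P k)).mulVec ((evol A k l).mulVec ξ)
          = ((1 : Mat N) - P l).mulVec ξ := by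
        rw [Matrix.mulVec_mulVec, mul_assoc, hcomm, ← mul_assoc, evol_mul', evol_self, one_mul]
      have hb1 : ‖evol A l k * ((1 : Mat N) - P k)‖ ≤ γ ^ (l - k) * (K * α ^ (k - l) * ε ^ k) := by
        rw [norm_evol_eq A hγ l k]
        apply mul_le_mul_of_nonneg_left _ (by positivity)
        have hpow : (1/α : ℝ) ^ (l - k) = α ^ (k - l) := by
          rw [one_div, _root_.inv_zpow, ← _root_.zpow_neg, neg_sub]
        rw [← hpow]
        exact hU l k hlk
      have hb2 : ‖(evol A k l).mulVec ξ‖ ≤ C * (γ ^ k * ε ^ l) := by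
        have h := hC k hlk
        rw [_root_.zpow_neg, _root_.zpow_neg] at h
        exact le_of_weighted_le (by positivity) (by positivity) h
      calc ‖((1 : Mat N) - P l).mulVec ξ‖
          = ‖(evol A l k * ((1 : Mat N) - P k)).mulVec ((evol A k l).mulVec ξ)‖ := by rw [hid]
        _ ≤ ‖evol A l k * ((1 : Mat N) - P k)‖ * ‖(evol A k l).mulVec ξ‖ :=
            Matrix.linfty_opNorm_mulVec _ _
        _ ≤ (γ ^ (l - k) * (K * α ^ (k - l) * ε ^ k)) * (C * (γ ^ k * ε ^ l)) :=
            mul_le_mul hb1 hb2 (norm_nonneg _) (by positivity)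
        _ = (K * C * γ ^ l * ε ^ l * ε ^ l) * (α * ε) ^ n := by
            rw [hk, show l - (l + (n:ℤ)) = -(n:ℤ) by ring, show (l + (n:ℤ)) - l = (n:ℤ) by ring,
              zpow_add₀ hγ', zpow_add₀ hε', _root_.zpow_neg, zpow_natCast, zpow_natCast, zpow_natCast,
              mul_pow]
            field_simp
    have hzero : ‖((1 : Mat N) - P l).mulVec ξ‖ = 0 :=
      vanish_of_le_geom (norm_nonneg _) hαε0 hαε key
    have := norm_eq_zero.mp hzero
    rw [Matrix.sub_mulVec, Matrix.one_mulVec, sub_eq_zero] at this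
    exact this.symm
  -- converse: unstable vectors satisfy P l ξ = 0
  have unstable_mem : ∀ (l : ℤ) (ξ : Fin N → ℝ), ξ ∈ unstableSet A γ ε l → (P l).mulVec ξ = 0 := by
    intro l ξ ⟨C, hC⟩
    have key : ∀ n : ℕ, ‖(P l).mulVec ξ‖
        ≤ (K * C * γ ^ l * ε ^ l * ε ^ l) * (α / ε) ^ n := by
      intro n
      set k : ℤ := l - n with hk
      have hkl : k ≤ l := by simp [hk]
      have hid : (evol A l k * P k).mulVec ((evol A k l).mulVec ξ) = (P l).mulVec ξ := by
        rw [Matrix.mulVec_mulVec, mul_assoc, proj_evol hP, ← mul_assoc, evol_mul', evol_self,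
          one_mul]
      have hb1 : ‖evol A l k * P k‖ ≤ γ ^ (l - k) * (K * α ^ (l - k) * ε ^ k) := by
        rw [norm_evol_eq A hγ l k]
        exact mul_le_mul_of_nonneg_left (hS l k hkl) (by positivity)
      have hb2 : ‖(evol A k l).mulVec ξ‖ ≤ C * (γ ^ k * ε ^ l) := by
        have h := hC k hkl
        rw [_root_.zpow_neg, _root_.zpow_neg] at h
        exact le_of_weighted_le (by positivity) (by positivity) h
      calc ‖(P l).mulVec ξ‖
          = ‖(evol A l k * P k).mulVec ((evol A k l).mulVec ξ)‖ := by rw [hid]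
        _ ≤ ‖evol A l k * P k‖ * ‖(evol A k l).mulVec ξ‖ := Matrix.linfty_opNorm_mulVec _ _
        _ ≤ (γ ^ (l - k) * (K * α ^ (l - k) * ε ^ k)) * (C * (γ ^ k * ε ^ l)) :=
            mul_le_mul hb1 hb2 (norm_nonneg _) (by positivity)
        _ = (K * C * γ ^ l * ε ^ l * ε ^ l) * (α / ε) ^ n := by
            rw [hk, show l - (l - (n:ℤ)) = (n:ℤ) by ring, zpow_sub₀ hγ', zpow_sub₀ hε',
              zpow_natCast, zpow_natCast, zpow_natCast, div_pow]
            field_simp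
    have hzero : ‖(P l).mulVec ξ‖ = 0 :=
      vanish_of_le_geom (norm_nonneg _) hαdε0 hαdε key
    exact norm_eq_zero.mp hzero
  refine ⟨?_, ?_, ?_, ?_⟩
  · intro l
    ext ξ
    constructor
    · intro h
      exact ⟨ξ, stable_mem l ξ h⟩
    · rintro ⟨η, rfl⟩
      apply mem_stable
      rw [Matrix.mulVec_mulVec, hP.1]
  · intro l
    ext ξ
    exact ⟨unstable_mem l ξ, mem_unstable l ξ⟩
  · intro l
    ext ξ
    simp only [Set.mem_inter_iff, Set.mem_singleton_iff]
    constructor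
    · rintro ⟨hs, hu⟩
      rw [← stable_mem l ξ hs]
      exact unstable_mem l ξ hu
    · rintro rfl
      exact ⟨mem_stable l 0 (Matrix.mulVec_zero _), mem_unstable l 0 (Matrix.mulVec_zero _)⟩
  · intro l ξ
    refine ⟨(P l).mulVec ξ, mem_stable l _ ?_, ξ - (P l).mulVec ξ, mem_unstable l _ ?_, by abel⟩
    · rw [Matrix.mulVec_mulVec, hP.1]
    · rw [Matrix.mulVec_sub, Matrix.mulVec_mulVec, hP.1, sub_self]
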